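/- Let T > 0, let p : [0,T] × ℝ^d → ℝ be continuously differentiable with p(t,x) > 0 for all (t,x), and let v : [0,T] × ℝ^d → ℝ^d be continuous and continuously differentiable in x. Assume the continuity equation ∂_t p(t,x) = − div_x( p(t,·) v(t,·) )(x) holds for all (t,x). Let x₀ ∈ ℝ^d and let Φ : [0,T] → ℝ^d be differentiable with Φ(0) = x₀ and Φ'(t) = v(t, Φ(t)) for all t. Then for every t ∈ [0,T], log p(t, Φ(t)) = log p(0, x₀) − ∫_0^t (div_x v(s,·))(Φ(s)) ds. -/

import Mathlib

open MeasureTheory Filter Set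

/-- Divergence of a vector field on `ℝ^d`: the sum of the partial derivatives
`∂F_i/∂x_i`, i.e. the trace of the Jacobian. -/
noncomputable def vdiv {d : ℕ} (F : (Fin d → ℝ) → (Fin d → ℝ)) (x : Fin d → ℝ) : ℝ :=
  ∑ i, fderiv ℝ F x (Pi.single i 1) i


lemma clm_eval_eq_sum {d : ℕ} (L : (Fin d → ℝ) →L[ℝ] ℝ) (w : Fin d → ℝ) :
    L w = ∑ i, w i * L (Pi.single i 1) := by
  conv_lhs => rw [← Finset.univ_sum_single w]
  rw [map_sum]
  refine Finset.sum_congr rfl fun i _ => ?_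
  have h : Pi.single i (w i) = w i • (Pi.single i 1 : Fin d → ℝ) := by
    simp [← Pi.single_smul]
  rw [h, _root_.map_smul, smul_eq_mul]

lemma vdiv_smul {d : ℕ} {q : (Fin d → ℝ) → ℝ} {F : (Fin d → ℝ) → (Fin d → ℝ)}
    {x : Fin d → ℝ} (hq : DifferentiableAt ℝ q x) (hF : DifferentiableAt ℝ F x) :
    vdiv (fun y => q y • F y) x
      = (∑ i, fderiv ℝ q x (Pi.single i 1) * F x i) + q x * vdiv F x := by
  have h : fderiv ℝ (fun y => q y • F y) x = _ := (hq.hasFDerivAt.smul hF.hasFDerivAt).fderiv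
  unfold vdiv
  rw [h]
  simp only [ContinuousLinearMap.add_apply, ContinuousLinearMap.coe_smul',
    ContinuousLinearMap.smulRight_apply, Pi.add_apply, Pi.smul_apply, smul_eq_mul]
  rw [Finset.sum_add_distrib, Finset.mul_sum, add_comm]


/-- **Instantaneous change-of-variables formula**: along a trajectory `Φ` of the velocity
field `v` of a solution of the continuity equation,
`log p(t, Φ(t)) = log p(0, x₀) − ∫₀ᵗ (div_x v(s,·))(Φ(s)) ds`. -/
theorem instantaneous_change_of_variables {d : ℕ} (T : ℝ) (hT : 0 < T)
    (p : ℝ × (Fin d → ℝ) → ℝ) (v : ℝ × (Fin d → ℝ) → (Fin d → ℝ))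
    -- `p` continuously differentiable and positive on `[0,T] × ℝ^d`
    (hp : ContDiff ℝ 1 p) (hppos : ∀ t ∈ Icc (0 : ℝ) T, ∀ x, 0 < p (t, x))
    -- `v` continuous, and continuously differentiable in `x`
    (hv : Continuous v) (hvx : ∀ t ∈ Icc (0 : ℝ) T, ContDiff ℝ 1 fun x => v (t, x))
    -- the continuity equation `∂_t p = −div_x(p v)`
    (hce : ∀ t ∈ Icc (0 : ℝ) T, ∀ x,
      HasDerivAt (fun s => p (s, x)) (- vdiv (fun y => p (t, y) • v (t, y)) x) t)
    -- `Φ` is a trajectory of the velocity field `v` starting at `x₀`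
    (x₀ : Fin d → ℝ) (Φ : ℝ → (Fin d → ℝ)) (hΦ0 : Φ 0 = x₀)
    (hΦ : ∀ t ∈ Icc (0 : ℝ) T, HasDerivAt Φ (v (t, Φ t)) t) :
    ∀ t ∈ Icc (0 : ℝ) T,
      Real.log (p (t, Φ t))
        = Real.log (p (0, x₀)) - ∫ s in (0 : ℝ)..t, vdiv (fun y => v (s, y)) (Φ s) := by
  have hpd : Differentiable ℝ p := hp.differentiable one_ne_zero
  -- key identity: total derivative of p along the flow
  have key : ∀ s ∈ Icc (0:ℝ) T,
      fderiv ℝ p (s, Φ s) (1, v (s, Φ s))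
        = -(p (s, Φ s)) * vdiv (fun y => v (s, y)) (Φ s) := by
    intro s hs
    set L := fderiv ℝ p (s, Φ s) with hL
    -- fderiv of the space slice
    have hslice : HasFDerivAt (fun y => p (s, y))
        (L.comp (ContinuousLinearMap.inr ℝ ℝ (Fin d → ℝ))) (Φ s) := by
      have hι : HasFDerivAt (fun y : Fin d → ℝ => ((s, y) : ℝ × (Fin d → ℝ)))
          (ContinuousLinearMap.inr ℝ ℝ (Fin d → ℝ)) (Φ s) := by
        have := (hasFDerivAt_const (𝕜 := ℝ) s (Φ s)).prodMk (hasFDerivAt_id (Φ s))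
        exact hasFDerivAt_prodMk_right s (Φ s)
      exact (hpd (s, Φ s)).hasFDerivAt.comp (Φ s) hι
    -- time part via continuity equation
    have htime : HasDerivAt (fun u => p (u, Φ s)) (L (1, 0)) s := by
      have h1 : HasDerivAt (fun u => ((u, Φ s) : ℝ × (Fin d → ℝ))) (1, 0) s :=
        (hasDerivAt_id s).prodMk (hasDerivAt_const s _)
      exact (hpd (s, Φ s)).hasFDerivAt.comp_hasDerivAt s h1
    have htime' : L (1, 0) = - vdiv (fun y => p (s, y) • v (s, y)) (Φ s) :=
      htime.unique (hce s hs (Φ s))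
    -- expand the divergence of the product
    have hqdiff : DifferentiableAt ℝ (fun y => p (s, y)) (Φ s) := hslice.differentiableAt
    have hFdiff : DifferentiableAt ℝ (fun y => v (s, y)) (Φ s) :=
      ((hvx s hs).differentiable one_ne_zero) (Φ s)
    have hprod := vdiv_smul hqdiff hFdiff
    -- fderiv of the slice
    have hqfd : fderiv ℝ (fun y => p (s, y)) (Φ s)
        = L.comp (ContinuousLinearMap.inr ℝ ℝ (Fin d → ℝ)) := hslice.fderiv
    -- space directional derivative as a sum
    have hspace : L (0, v (s, Φ s))
        = ∑ i, v (s, Φ s) i * L (0, Pi.single i 1) := by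
      have := clm_eval_eq_sum (L.comp (ContinuousLinearMap.inr ℝ ℝ (Fin d → ℝ))) (v (s, Φ s))
      simpa using this
    have hsplit : L (1, v (s, Φ s)) = L (1, 0) + L (0, v (s, Φ s)) := by
      rw [← map_add]
      norm_num
    rw [hsplit, htime', hprod, hqfd, hspace]
    simp only [ContinuousLinearMap.comp_apply, ContinuousLinearMap.inr_apply]
    have : ∑ i, L (0, Pi.single i 1) * v (s, Φ s) i
        = ∑ i, v (s, Φ s) i * L (0, Pi.single i 1) :=
      Finset.sum_congr rfl fun i _ => mul_comm _ _
    rw [this]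
    ring
  -- derivative of p along the trajectory
  have hfderiv : ∀ s ∈ Icc (0:ℝ) T,
      HasDerivAt (fun u => p (u, Φ u))
        (-(p (s, Φ s)) * vdiv (fun y => v (s, y)) (Φ s)) s := by
    intro s hs
    have hγ : HasDerivAt (fun u => ((u, Φ u) : ℝ × (Fin d → ℝ))) (1, v (s, Φ s)) s :=
      (hasDerivAt_id s).prodMk (hΦ s hs)
    have := (hpd (s, Φ s)).hasFDerivAt.comp_hasDerivAt s hγ
    rwa [key s hs] at this
  -- derivative of log p along the trajectory
  have hlog : ∀ s ∈ Icc (0:ℝ) T,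
      HasDerivAt (fun u => Real.log (p (u, Φ u)))
        (-(vdiv (fun y => v (s, y)) (Φ s))) s := by
    intro s hs
    have hpos := hppos s hs (Φ s)
    have := (hfderiv s hs).log hpos.ne'
    convert this using 1
    field_simp
  intro t ht
  have huIcc : uIcc (0:ℝ) t = Icc 0 t := uIcc_of_le ht.1
  have hsub : Icc (0:ℝ) t ⊆ Icc 0 T := Icc_subset_Icc le_rfl ht.2
  -- continuity of the integrand
  have hΦcont : ContinuousOn Φ (Icc 0 T) := fun s hs =>
    ((hΦ s hs).continuousAt).continuousWithinAt
  have hγcont : ContinuousOn (fun s => ((s, Φ s) : ℝ × (Fin d → ℝ))) (Icc 0 T) :=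
    continuousOn_id.prodMk hΦcont
  have hintegrand : ContinuousOn
      (fun s => vdiv (fun y => v (s, y)) (Φ s)) (Icc 0 T) := by
    have heq : ∀ s ∈ Icc (0:ℝ) T, vdiv (fun y => v (s, y)) (Φ s)
        = -(fderiv ℝ p (s, Φ s) (1, v (s, Φ s))) / p (s, Φ s) := by
      intro s hs
      rw [key s hs]
      have := (hppos s hs (Φ s)).ne'
      field_simp
    refine ContinuousOn.congr ?_ heq
    have hfd : Continuous (fderiv ℝ p) := hp.continuous_fderiv one_ne_zero
    have h1 : ContinuousOn
        (fun s => fderiv ℝ p (s, Φ s) (1, v (s, Φ s))) (Icc 0 T) := by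
      have heval : Continuous (fun q : ((ℝ × (Fin d → ℝ)) →L[ℝ] ℝ) × (ℝ × (Fin d → ℝ)) =>
          q.1 q.2) := isBoundedBilinearMap_apply.continuous
      exact heval.comp_continuousOn
        (((hfd.comp_continuousOn hγcont)).prodMk
          (continuousOn_const.prodMk (hv.comp_continuousOn hγcont)))
    exact (h1.neg.div (hp.continuous.comp_continuousOn hγcont)
      (fun s hs => (hppos s hs (Φ s)).ne'))
  have hint : IntervalIntegrable (fun s => vdiv (fun y => v (s, y)) (Φ s)) volume 0 t := by
    apply ContinuousOn.intervalIntegrable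
    apply hintegrand.mono
    rw [huIcc]; exact hsub
  have hFTC := intervalIntegral.integral_eq_sub_of_hasDerivAt
    (f := fun u => Real.log (p (u, Φ u)))
    (f' := fun s => -(vdiv (fun y => v (s, y)) (Φ s)))
    (fun s hs => hlog s (hsub (huIcc ▸ hs))) hint.neg
  rw [intervalIntegral.integral_neg] at hFTC
  simp only [hΦ0] at hFTC
  linarith
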